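/- Let F(X) ∈ ℤ[X] be a decomposable form of degree d in n variables not vanishing on ℤⁿ \ {0}, with V(F) finite. Let T ∈ GLₙ(ℝ) with |det T| = 1 achieve H(F∘T) = 𝔪(F), let P(T) be the parallelepiped spanned by ±columns of T, and let λ₁ be the first successive minimum of P(T) with respect to ℤⁿ. Then λ₁ ≥ n⁻¹ · 𝔪(F)^{-1/d}. -/

import Mathlib

open scoped BigOperators
open MeasureTheory
open scoped Pointwise

/-- The Euclidean (L²) norm of a coefficient vector in `ℂⁿ`. -/
noncomputable def e2norm {n : ℕ} (v : Fin n → ℂ) : ℝ := Real.sqrt (∑ j, ‖v j‖ ^ 2)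

/-- Coefficient vectors of the linear factors of `F ∘ S`. -/
noncomputable def compMat {n d : ℕ} (L : Fin d → Fin n → ℂ)
    (S : Matrix (Fin n) (Fin n) ℝ) : Fin d → Fin n → ℂ :=
  fun i j => ∑ k, L i k * (S k j : ℂ)

/-- The geometric height `𝔪(F) = inf {H(F∘S) : S ∈ GLₙ(ℝ), |det S| = 1}`. -/
noncomputable def mD {n d : ℕ} (L : Fin d → Fin n → ℂ) : ℝ :=
  sInf {h : ℝ | ∃ S : Matrix (Fin n) (Fin n) ℝ, |S.det| = 1 ∧
    h = ∏ i, e2norm (compMat L S i)}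

/-- The `(k+1)`-st successive minimum of `P ⊆ ℝⁿ` with respect to the lattice `ℤⁿ`. -/
noncomputable def succMin (n : ℕ) (P : Set (Fin n → ℝ)) (k : ℕ) : ℝ :=
  sInf {r : ℝ | 0 < r ∧ ∃ v : Fin (k + 1) → (Fin n → ℤ),
    LinearIndependent ℝ (fun i => (fun j => ((v i j : ℝ)) : Fin n → ℝ)) ∧
    ∀ i, (fun j => ((v i j : ℝ)) : Fin n → ℝ) ∈ r • P}

/-- Let `F ∈ ℤ[X]` be a decomposable form of degree `d` in `n`
variables not vanishing on `ℤⁿ \ {0}`, with `V(F)` finite.  Let `T ∈ GLₙ(ℝ)` with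
`|det T| = 1` achieve `H(F∘T) = 𝔪(F)`, let `P(T)` be the parallelepiped spanned by
the `±`columns of `T`, and let `λ₁` be its first successive minimum with respect to
`ℤⁿ`.  Then `λ₁ ≥ n⁻¹ · 𝔪(F)^{-1/d}`. -/
theorem first_minimum_lower (n d : ℕ) (hn : 0 < n) (hd : 0 < d)
    (L : Fin d → Fin n → ℂ) (F : (Fin n → ℝ) → ℝ)
    (hF : ∀ x : Fin n → ℝ, (F x : ℂ) = ∏ i, ∑ j, L i j * (x j : ℂ))
    (hint : ∀ x : Fin n → ℤ, ∃ k : ℤ, F (fun j => (x j : ℝ)) = k)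
    (hnv : ∀ x : Fin n → ℤ, x ≠ 0 → F (fun j => (x j : ℝ)) ≠ 0)
    (hV : volume {x : Fin n → ℝ | |F x| ≤ 1} < ⊤)
    (T : Matrix (Fin n) (Fin n) ℝ) (hT : |T.det| = 1)
    (hmin : ∏ i, e2norm (compMat L T i) = mD L) :
    (n : ℝ)⁻¹ * mD L ^ (-(1 : ℝ) / d)
      ≤ succMin n {x : Fin n → ℝ |
          ∃ a : Fin n → ℝ, (∀ j, |a j| ≤ 1) ∧ x = T.mulVec a} 0 := by
  classical
  -- Notation for the parallelepiped and the successive-minimum defining set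
  set P : Set (Fin n → ℝ) := {x : Fin n → ℝ |
      ∃ a : Fin n → ℝ, (∀ j, |a j| ≤ 1) ∧ x = T.mulVec a} with hP
  have hm0 : 0 ≤ mD L := by
    apply Real.sInf_nonneg
    rintro h ⟨S, -, rfl⟩
    exact Finset.prod_nonneg fun i _ => Real.sqrt_nonneg _
  -- the set whose inf is the successive minimum
  set Sset : Set ℝ := {r : ℝ | 0 < r ∧ ∃ v : Fin (0 + 1) → (Fin n → ℤ),
      LinearIndependent ℝ (fun i => (fun j => ((v i j : ℝ)) : Fin n → ℝ)) ∧
      ∀ i, (fun j => ((v i j : ℝ)) : Fin n → ℝ) ∈ r • P} with hSset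
  have hsm : succMin n P 0 = sInf Sset := rfl
  rcases eq_or_lt_of_le hm0 with hm | hm
  · -- mD L = 0 : the claimed bound is 0
    rw [← hm, Real.zero_rpow (by positivity : -(1:ℝ)/d ≠ 0), mul_zero, hsm]
    exact Real.sInf_nonneg fun r hr => le_of_lt hr.1
  -- main case : mD L > 0
  have hTdet : IsUnit T.det := isUnit_iff_ne_zero.mpr (by
    intro h; rw [h, abs_zero] at hT; norm_num at hT)
  -- Step 1 : the set is nonempty
  have hne : Sset.Nonempty := by
    set e : Fin n → ℝ := fun j => if j = ⟨0, hn⟩ then 1 else 0 with he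
    set c : Fin n → ℝ := T⁻¹.mulVec e with hc
    have hTc : T.mulVec c = e := by
      rw [hc, Matrix.mulVec_mulVec, Matrix.mul_nonsing_inv _ hTdet, Matrix.one_mulVec]
    set r : ℝ := 1 + ∑ j, |c j| with hr
    have hrpos : 0 < r := by
      have : (0:ℝ) ≤ ∑ j, |c j| := Finset.sum_nonneg fun j _ => abs_nonneg _
      linarith
    refine ⟨r, hrpos, fun _ => fun j => if j = ⟨0, hn⟩ then 1 else 0, ?_, ?_⟩
    · haveI : Unique (Fin (0 + 1)) := inferInstanceAs (Unique (Fin 1))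
      rw [linearIndependent_unique_iff]
      intro h0
      have := congrFun h0 ⟨0, hn⟩
      simp at this
    · intro i
      have hmem : T.mulVec (r⁻¹ • c) ∈ P := by
        refine ⟨r⁻¹ • c, fun j => ?_, rfl⟩
        have h1 : |c j| ≤ r := by
          have : |c j| ≤ ∑ k, |c k| :=
            Finset.single_le_sum (fun k _ => abs_nonneg (c k)) (Finset.mem_univ j)
          linarith
        rw [Pi.smul_apply, smul_eq_mul, abs_mul, abs_inv, abs_of_pos hrpos]
        rw [inv_mul_le_iff₀ hrpos, mul_one]
        exact h1
      have : r • T.mulVec (r⁻¹ • c) ∈ r • P := Set.smul_mem_smul_set hmem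
      convert this using 1
      funext j
      have : r • T.mulVec (r⁻¹ • c) = e := by
        rw [Matrix.mulVec_smul, smul_smul, mul_inv_cancel₀ (ne_of_gt hrpos), one_smul, hTc]
      rw [this, he]
      by_cases hj : j = ⟨0, hn⟩ <;> simp [hj]
  -- Step 2 : every element of the set is at least the claimed bound
  rw [hsm]
  apply le_csInf hne
  rintro r ⟨hrpos, v, hli, hv⟩
  -- the nonzero integer point
  set z : Fin n → ℤ := v 0 with hz
  have hz0 : z ≠ 0 := by
    intro h
    have := hli.ne_zero 0
    apply this
    funext j
    rw [hz] at h
    simp [h]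
  obtain ⟨y, ⟨a, ha, rfl⟩, hy⟩ := hv 0
  -- z = T.mulVec (r • a)
  set b : Fin n → ℝ := r • a with hb
  have hzb : (fun j => (z j : ℝ)) = T.mulVec b := by
    rw [hb, Matrix.mulVec_smul, ← hy]
  have hbbound : ∀ k, |b k| ≤ r := by
    intro k
    rw [hb, Pi.smul_apply, smul_eq_mul, abs_mul, abs_of_pos hrpos]
    calc r * |a k| ≤ r * 1 := by
          exact mul_le_mul_of_nonneg_left (ha k) (le_of_lt hrpos)
      _ = r := mul_one r
  -- |F z| ≥ 1
  have hFz1 : 1 ≤ |F (fun j => (z j : ℝ))| := by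
    obtain ⟨k, hk⟩ := hint z
    rw [hk]
    have hk0 : k ≠ 0 := by
      intro h; exact hnv z hz0 (by rw [hk, h]; norm_num)
    rw [← Int.cast_abs]
    exact_mod_cast Int.one_le_abs hk0
  -- factor identity
  have hfac : ∀ i, (∑ j, L i j * ((z j : ℝ) : ℂ))
      = ∑ k, compMat L T i k * ((b k : ℝ) : ℂ) := by
    intro i
    have hzj : ∀ j, ((z j : ℝ) : ℂ) = ∑ k, (T j k : ℂ) * (b k : ℂ) := by
      intro j
      have := congrFun hzb j
      rw [this]
      simp only [Matrix.mulVec, dotProduct]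
      push_cast
      rfl
    calc ∑ j, L i j * ((z j : ℝ) : ℂ)
        = ∑ j, ∑ k, L i j * ((T j k : ℂ) * (b k : ℂ)) := by
          refine Finset.sum_congr rfl fun j _ => ?_
          rw [hzj j, Finset.mul_sum]
      _ = ∑ k, ∑ j, L i j * ((T j k : ℂ) * (b k : ℂ)) := Finset.sum_comm
      _ = ∑ k, compMat L T i k * (b k : ℂ) := by
          refine Finset.sum_congr rfl fun k _ => ?_
          rw [compMat, Finset.sum_mul]
          exact Finset.sum_congr rfl fun j _ => by ring
  -- norm bound on each factor
  have hfacbound : ∀ i, ‖∑ j, L i j * ((z j : ℝ) : ℂ)‖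
      ≤ (n * r) * e2norm (compMat L T i) := by
    intro i
    rw [hfac i]
    have hcoord : ∀ k, ‖compMat L T i k‖ ≤ e2norm (compMat L T i) := by
      intro k
      rw [e2norm]
      have h1 : ‖compMat L T i k‖ ^ 2 ≤ ∑ j, ‖compMat L T i j‖ ^ 2 :=
        Finset.single_le_sum (f := fun j => ‖compMat L T i j‖ ^ 2)
          (fun j _ => sq_nonneg _) (Finset.mem_univ k)
      calc ‖compMat L T i k‖ = Real.sqrt (‖compMat L T i k‖ ^ 2) := by
            rw [Real.sqrt_sq (norm_nonneg _)]
        _ ≤ _ := Real.sqrt_le_sqrt h1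
    calc ‖∑ k, compMat L T i k * ((b k : ℝ) : ℂ)‖
        ≤ ∑ k, ‖compMat L T i k * ((b k : ℝ) : ℂ)‖ := norm_sum_le _ _
      _ ≤ ∑ k : Fin n, e2norm (compMat L T i) * r := by
          refine Finset.sum_le_sum fun k _ => ?_
          rw [norm_mul, Complex.norm_real, Real.norm_eq_abs]
          exact mul_le_mul (hcoord k) (hbbound k) (abs_nonneg _)
            (le_trans (norm_nonneg _) (hcoord k))
      _ = (n * r) * e2norm (compMat L T i) := by
          rw [Finset.sum_const, Finset.card_univ, Fintype.card_fin]
          ring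
  -- main inequality : 1 ≤ (n r)^d * mD L
  have hmain : 1 ≤ (n * r) ^ d * mD L := by
    have h1 : |F (fun j => (z j : ℝ))| = ∏ i, ‖∑ j, L i j * ((z j : ℝ) : ℂ)‖ := by
      rw [← Real.norm_eq_abs, ← Complex.norm_real, hF, norm_prod]
    have h2 : ∏ i, ‖∑ j, L i j * ((z j : ℝ) : ℂ)‖
        ≤ ∏ i, ((n * r) * e2norm (compMat L T i)) :=
      Finset.prod_le_prod (fun i _ => norm_nonneg _) (fun i _ => hfacbound i)
    have h3 : ∏ i, ((n * r) * e2norm (compMat L T i)) = (n * r) ^ d * mD L := by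
      rw [Finset.prod_mul_distrib, Finset.prod_const, Finset.card_univ,
        Fintype.card_fin, hmin]
    calc (1:ℝ) ≤ |F (fun j => (z j : ℝ))| := hFz1
      _ = _ := h1
      _ ≤ _ := h2
      _ = _ := h3
  have hnr : (0:ℝ) < n * r := by positivity
  -- deduce (mD L)⁻¹ ≤ (n r)^d
  have hinv : (mD L)⁻¹ ≤ (n * r) ^ d := by
    rw [inv_le_iff_one_le_mul₀ hm]
    linarith [hmain]
  -- take d-th roots
  have hroot : (mD L)⁻¹ ^ ((1:ℝ)/d) ≤ n * r := by
    have := Real.rpow_le_rpow (by positivity) hinv (by positivity : (0:ℝ) ≤ 1/d)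
    calc (mD L)⁻¹ ^ ((1:ℝ)/d) ≤ ((n * r) ^ d) ^ ((1:ℝ)/d) := this
      _ = (n * r) ^ ((d : ℝ) * (1/d)) := by
          rw [← Real.rpow_natCast (n * r) d, ← Real.rpow_mul (le_of_lt hnr)]
      _ = n * r := by
          rw [mul_one_div, div_self (by positivity : (d:ℝ) ≠ 0), Real.rpow_one]
  have hbound : mD L ^ (-(1:ℝ)/d) = (mD L)⁻¹ ^ ((1:ℝ)/d) := by
    rw [Real.inv_rpow hm0, neg_div, Real.rpow_neg hm0]
  rw [hbound]
  rw [inv_mul_le_iff₀ (by exact_mod_cast hn : (0:ℝ) < n)]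
  linarith [hroot]
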